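/- arXiv:1309.7625 — 3 statements merged into one kernel-verified Lean document; each statement's English description precedes it below -/
import Mathlib

section
/- If ũ is harmonic on the open unit ball of ℝ^N and continuous on its closure, and h > 0, then u(x) = ∫₀¹ ε^{h-1} ũ(εx) dε defines a function harmonic on the open unit ball. -/
set_option maxHeartbeats 1000000
set_option synthInstance.maxHeartbeats 400000

open MeasureTheory Metric
open scoped RealInnerProductSpace

noncomputable def lap {N : ℕ} (f : EuclideanSpace ℝ (Fin N) → ℝ)
    (x : EuclideanSpace ℝ (Fin N)) : ℝ :=
  ∑ i, fderiv ℝ (fun y => fderiv ℝ f y (EuclideanSpace.single i 1)) x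
      (EuclideanSpace.single i 1)

def IsHarmonicOn {N : ℕ} (f : EuclideanSpace ℝ (Fin N) → ℝ)
    (U : Set (EuclideanSpace ℝ (Fin N))) : Prop :=
  ContDiffOn ℝ 2 f U ∧ ∀ x ∈ U, lap f x = 0

section Aux

open Set

variable {E : Type*} [NormedAddCommGroup E] [NormedSpace ℝ E] [ProperSpace E]

noncomputable instance instNACGBilin : NormedAddCommGroup (E →L[ℝ] E →L[ℝ] ℝ) := inferInstance

noncomputable def Vz (u : E → ℝ) (h : ℝ) : E → ℝ :=
  fun x => ∫ ε in Ioo (0:ℝ) 1, ε ^ (h - 1) * u (ε • x)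

noncomputable def Vo (u : E → ℝ) (h : ℝ) : E → (E →L[ℝ] ℝ) :=
  fun x => ∫ ε in Ioo (0:ℝ) 1, (ε ^ (h - 1) * ε) • fderiv ℝ u (ε • x)

noncomputable def Vt (u : E → ℝ) (h : ℝ) : E → (E →L[ℝ] E →L[ℝ] ℝ) :=
  fun x => ∫ ε in Ioo (0:ℝ) 1, (ε ^ (h - 1) * ε * ε) • fderiv ℝ (fderiv ℝ u) (ε • x)

lemma main_aux (u : E → ℝ) (husm : ContDiffOn ℝ 2 u (ball 0 1))
    (hc : ContinuousOn u (closedBall 0 1)) (h : ℝ) (hh : 0 < h)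
    (x0 : E) (hx0 : x0 ∈ ball (0:E) 1) :
    HasFDerivAt (Vz u h) (Vo u h x0) x0 ∧ HasFDerivAt (Vo u h) (Vt u h x0) x0 ∧
    ContinuousAt (Vt u h) x0 ∧
    Integrable (fun ε : ℝ => ((ε ^ (h - 1) * ε * ε) • fderiv ℝ (fderiv ℝ u) (ε • x0) :
      E →L[ℝ] E →L[ℝ] ℝ))
      (volume.restrict (Ioo (0:ℝ) 1)) := by
  have hopen : IsOpen (ball (0:E) 1) := isOpen_ball
  have hC2 : ∀ y ∈ ball (0:E) 1, ContDiffAt ℝ 2 u y := fun y hy =>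
    husm.contDiffAt (hopen.mem_nhds hy)
  have hd1 : ∀ y ∈ ball (0:E) 1, HasFDerivAt u (fderiv ℝ u y) y := fun y hy =>
    ((hC2 y hy).differentiableAt (by norm_num)).hasFDerivAt
  have hC1 : ∀ y ∈ ball (0:E) 1, ContDiffAt ℝ 1 (fderiv ℝ u) y := fun y hy =>
    (hC2 y hy).fderiv_right (m := 1) (by norm_num)
  have hd2 : ∀ y ∈ ball (0:E) 1, HasFDerivAt (fderiv ℝ u) (fderiv ℝ (fderiv ℝ u) y) y :=
    fun y hy => ((hC1 y hy).differentiableAt one_ne_zero).hasFDerivAt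
  have cont1 : ContinuousOn (fderiv ℝ u) (ball (0:E) 1) := fun y hy =>
    ((hC1 y hy).continuousAt).continuousWithinAt
  have cont2at : ∀ y ∈ ball (0:E) 1, ContinuousAt (fderiv ℝ (fderiv ℝ u)) y := fun y hy =>
    ((hC1 y hy).fderiv_right (m := 0) (by norm_num)).continuousAt
  have cont2 : ContinuousOn (fderiv ℝ (fderiv ℝ u)) (ball (0:E) 1) := fun y hy =>
    (cont2at y hy).continuousWithinAt
  -- geometry
  set s : ℝ := (1 + ‖x0‖) / 2 with hs
  set δ : ℝ := (1 - ‖x0‖) / 2 with hδ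
  have hx0n : ‖x0‖ < 1 := by simpa using hx0
  have hspos : 0 < s := by rw [hs]; positivity
  have hs1 : s < 1 := by rw [hs]; linarith
  have hδpos : 0 < δ := by rw [hδ]; linarith
  have hx0s : ‖x0‖ ≤ s := by rw [hs]; linarith
  have hKball : closedBall (0:E) s ⊆ ball (0:E) 1 := closedBall_subset_ball hs1
  have hxs : ∀ x ∈ ball x0 δ, ‖x‖ ≤ s := by
    intro x hx
    have h1 : ‖x - x0‖ < δ := by rwa [mem_ball, dist_eq_norm] at hx
    have h2 : ‖x‖ - ‖x0‖ ≤ ‖x - x0‖ := norm_sub_norm_le x x0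
    rw [hs]; rw [hδ] at h1; linarith
  have hmemK : ∀ ε ∈ Ioo (0:ℝ) 1, ∀ x : E, ‖x‖ ≤ s → ε • x ∈ closedBall (0:E) s := by
    intro ε hε x hx
    rw [mem_closedBall_zero_iff, norm_smul, Real.norm_eq_abs, abs_of_pos hε.1]
    nlinarith [hε.1, hε.2, norm_nonneg x]
  have hmemB : ∀ ε ∈ Ioo (0:ℝ) 1, ∀ x : E, ‖x‖ ≤ s → ε • x ∈ ball (0:E) 1 :=
    fun ε hε x hx => hKball (hmemK ε hε x hx)
  -- bounds on compact set
  obtain ⟨C0, hC0⟩ := (isCompact_closedBall (0:E) s).exists_bound_of_continuousOn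
    (hc.mono (closedBall_subset_closedBall hs1.le))
  obtain ⟨C1, hC1b⟩ := (isCompact_closedBall (0:E) s).exists_bound_of_continuousOn
    (cont1.mono hKball)
  obtain ⟨C2, hC2b⟩ := (isCompact_closedBall (0:E) s).exists_bound_of_continuousOn
    (cont2.mono hKball)
  -- integrable bound
  have hbint : ∀ C : ℝ, Integrable (fun ε : ℝ => ε ^ (h - 1) * C)
      (volume.restrict (Ioo (0:ℝ) 1)) :=
    fun C => ((intervalIntegral.integrableOn_Ioo_rpow_iff one_pos).2 (by linarith)).mul_const C
  have hrpow : ContinuousOn (fun ε : ℝ => ε ^ (h - 1)) (Ioo (0:ℝ) 1) := fun ε hε =>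
    (Real.continuousAt_rpow_const ε (h - 1) (Or.inl (ne_of_gt hε.1))).continuousWithinAt
  have hsmcont : ∀ x : E, Continuous (fun ε : ℝ => ε • x) :=
    fun x => continuous_id.smul continuous_const
  -- measurability
  have measF : ∀ x : E, ‖x‖ ≤ s → AEStronglyMeasurable (fun ε : ℝ => ε ^ (h - 1) * u (ε • x))
      (volume.restrict (Ioo (0:ℝ) 1)) := by
    intro x hx
    refine (ContinuousOn.mul hrpow ?_).aestronglyMeasurable measurableSet_Ioo
    exact (hc.mono (closedBall_subset_closedBall hs1.le)).comp
      ((hsmcont x).continuousOn) (fun ε hε => hmemK ε hε x hx)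
  have measF1 : ∀ x : E, ‖x‖ ≤ s →
      AEStronglyMeasurable (fun ε : ℝ => (ε ^ (h - 1) * ε) • fderiv ℝ u (ε • x))
      (volume.restrict (Ioo (0:ℝ) 1)) := by
    intro x hx
    refine (ContinuousOn.smul (hrpow.mul continuousOn_id) ?_).aestronglyMeasurable
      measurableSet_Ioo
    exact cont1.comp ((hsmcont x).continuousOn) (fun ε hε => hmemB ε hε x hx)
  have measF2 : ∀ x : E, ‖x‖ ≤ s →
      AEStronglyMeasurable (fun ε : ℝ => (ε ^ (h - 1) * ε * ε) • fderiv ℝ (fderiv ℝ u) (ε • x))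
      (volume.restrict (Ioo (0:ℝ) 1)) := by
    intro x hx
    refine (ContinuousOn.smul ((hrpow.mul continuousOn_id).mul continuousOn_id)
      ?_).aestronglyMeasurable measurableSet_Ioo
    exact cont2.comp ((hsmcont x).continuousOn) (fun ε hε => hmemB ε hε x hx)
  -- derivative facts
  have hsmul1 : ∀ (ε : ℝ) (T : E →L[ℝ] ℝ),
      T.comp (ε • ContinuousLinearMap.id ℝ E) = ε • T := by
    intro ε T; ext v; simp
  have hsmul2 : ∀ (ε : ℝ) (T : E →L[ℝ] E →L[ℝ] ℝ),
      T.comp (ε • ContinuousLinearMap.id ℝ E) = ε • T := by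
    intro ε T; ext v; simp
  have keyF : ∀ ε ∈ Ioo (0:ℝ) 1, ∀ x : E, ‖x‖ ≤ s →
      HasFDerivAt (fun y : E => ε ^ (h - 1) * u (ε • y))
        ((ε ^ (h - 1) * ε) • fderiv ℝ u (ε • x)) x := by
    intro ε hε x hx
    have h0 : HasFDerivAt (fun y : E => ε • y) (ε • ContinuousLinearMap.id ℝ E) x :=
      (hasFDerivAt_id x).const_smul ε
    have h1 := (hd1 _ (hmemB ε hε x hx)).comp x h0
    rw [hsmul1] at h1
    have h2 := h1.const_mul (ε ^ (h - 1))
    simpa [smul_smul] using h2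
  have keyF1 : ∀ ε ∈ Ioo (0:ℝ) 1, ∀ x : E, ‖x‖ ≤ s →
      HasFDerivAt (fun y : E => (ε ^ (h - 1) * ε) • fderiv ℝ u (ε • y))
        ((ε ^ (h - 1) * ε * ε) • fderiv ℝ (fderiv ℝ u) (ε • x)) x := by
    intro ε hε x hx
    have h0 : HasFDerivAt (fun y : E => ε • y) (ε • ContinuousLinearMap.id ℝ E) x :=
      (hasFDerivAt_id x).const_smul ε
    have h1 := (hd2 _ (hmemB ε hε x hx)).comp x h0
    rw [hsmul2] at h1
    have h2 := h1.const_smul (ε ^ (h - 1) * ε)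
    rw [smul_smul] at h2; exact h2
  -- norm bounds
  have hnorm2 : ∀ (c : ℝ) (T : E →L[ℝ] E →L[ℝ] ℝ), ‖c • T‖ ≤ |c| * ‖T‖ := by
    intro c T
    refine ContinuousLinearMap.opNorm_le_bound _ (by positivity) fun v => ?_
    rw [ContinuousLinearMap.smul_apply, norm_smul, Real.norm_eq_abs, mul_assoc]
    exact mul_le_mul_of_nonneg_left (T.le_opNorm v) (abs_nonneg c)
  have hb0 : ∀ ε ∈ Ioo (0:ℝ) 1, ∀ x : E, ‖x‖ ≤ s →
      ‖ε ^ (h - 1) * u (ε • x)‖ ≤ ε ^ (h - 1) * C0 := by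
    intro ε hε x hx
    have h1 : (0:ℝ) ≤ ε ^ (h - 1) := Real.rpow_nonneg hε.1.le _
    have h2 := hC0 _ (hmemK ε hε x hx)
    rw [norm_mul, Real.norm_eq_abs (ε ^ (h - 1)), abs_of_nonneg h1]
    exact mul_le_mul_of_nonneg_left h2 h1
  have hb1 : ∀ ε ∈ Ioo (0:ℝ) 1, ∀ x : E, ‖x‖ ≤ s →
      ‖(ε ^ (h - 1) * ε) • fderiv ℝ u (ε • x)‖ ≤ ε ^ (h - 1) * C1 := by
    intro ε hε x hx
    have h1 : (0:ℝ) ≤ ε ^ (h - 1) := Real.rpow_nonneg hε.1.le _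
    have h2 := hC1b _ (hmemK ε hε x hx)
    have h3 : (0:ℝ) ≤ ‖fderiv ℝ u (ε • x)‖ := norm_nonneg _
    rw [norm_smul, Real.norm_eq_abs, abs_of_nonneg (mul_nonneg h1 hε.1.le)]
    have h4 : ε * ‖fderiv ℝ u (ε • x)‖ ≤ C1 := by
      calc ε * ‖fderiv ℝ u (ε • x)‖ ≤ 1 * C1 :=
            mul_le_mul hε.2.le h2 h3 zero_le_one
        _ = C1 := one_mul _
    calc ε ^ (h - 1) * ε * ‖fderiv ℝ u (ε • x)‖
        = ε ^ (h - 1) * (ε * ‖fderiv ℝ u (ε • x)‖) := by ring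
      _ ≤ ε ^ (h - 1) * C1 := mul_le_mul_of_nonneg_left h4 h1
  have hb2 : ∀ ε ∈ Ioo (0:ℝ) 1, ∀ x : E, ‖x‖ ≤ s →
      ‖(ε ^ (h - 1) * ε * ε) • fderiv ℝ (fderiv ℝ u) (ε • x)‖ ≤ ε ^ (h - 1) * C2 := by
    intro ε hε x hx
    have h1 : (0:ℝ) ≤ ε ^ (h - 1) := Real.rpow_nonneg hε.1.le _
    have h2 := hC2b _ (hmemK ε hε x hx)
    have h3 : (0:ℝ) ≤ ‖fderiv ℝ (fderiv ℝ u) (ε • x)‖ := norm_nonneg _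
    have h4 : ε * ε ≤ 1 := by nlinarith [hε.1.le, hε.2.le]
    have hC2nn : (0:ℝ) ≤ C2 := (norm_nonneg _).trans (hC2b 0 (mem_closedBall_self hspos.le))
    have h5 : ε * ε * ‖fderiv ℝ (fderiv ℝ u) (ε • x)‖ ≤ C2 := by
      calc ε * ε * ‖fderiv ℝ (fderiv ℝ u) (ε • x)‖ ≤ 1 * C2 :=
            mul_le_mul h4 h2 h3 zero_le_one
        _ = C2 := one_mul _
    calc ‖(ε ^ (h - 1) * ε * ε) • fderiv ℝ (fderiv ℝ u) (ε • x)‖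
        ≤ |ε ^ (h - 1) * ε * ε| * ‖fderiv ℝ (fderiv ℝ u) (ε • x)‖ := hnorm2 _ _
      _ = ε ^ (h - 1) * (ε * ε * ‖fderiv ℝ (fderiv ℝ u) (ε • x)‖) := by
          rw [abs_of_nonneg (mul_nonneg (mul_nonneg h1 hε.1.le) hε.1.le)]; ring
      _ ≤ ε ^ (h - 1) * C2 := mul_le_mul_of_nonneg_left h5 h1
  -- main applications
  have hA : HasFDerivAt (Vz u h) (Vo u h x0) x0 := by
    show HasFDerivAt (fun x : E => ∫ ε in Ioo (0:ℝ) 1, ε ^ (h - 1) * u (ε • x))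
      (∫ ε in Ioo (0:ℝ) 1, (ε ^ (h - 1) * ε) • fderiv ℝ u (ε • x0)) x0
    refine hasFDerivAt_integral_of_dominated_of_fderiv_le
      (F' := fun x (ε : ℝ) => (ε ^ (h - 1) * ε) • fderiv ℝ u (ε • x))
      (bound := fun ε : ℝ => ε ^ (h - 1) * C1) (ball_mem_nhds x0 hδpos) ?_ ?_ (measF1 x0 hx0s) ?_ (hbint C1) ?_
    · filter_upwards [ball_mem_nhds x0 hδpos] with x hx
      exact measF x (hxs x hx)
    · refine (hbint C0).mono' (measF x0 hx0s) ?_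
      exact (ae_restrict_iff' measurableSet_Ioo).2 (ae_of_all _ fun ε hε => hb0 ε hε x0 hx0s)
    · exact (ae_restrict_iff' measurableSet_Ioo).2
        (ae_of_all _ fun ε hε x hx => hb1 ε hε x (hxs x hx))
    · exact (ae_restrict_iff' measurableSet_Ioo).2
        (ae_of_all _ fun ε hε x hx => keyF ε hε x (hxs x hx))
  have hB : HasFDerivAt (Vo u h) (Vt u h x0) x0 := by
    show HasFDerivAt (fun x : E => ∫ ε in Ioo (0:ℝ) 1, (ε ^ (h - 1) * ε) • fderiv ℝ u (ε • x))
      (∫ ε in Ioo (0:ℝ) 1, (ε ^ (h - 1) * ε * ε) • fderiv ℝ (fderiv ℝ u) (ε • x0)) x0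
    refine hasFDerivAt_integral_of_dominated_of_fderiv_le
      (F' := fun x (ε : ℝ) => (ε ^ (h - 1) * ε * ε) • fderiv ℝ (fderiv ℝ u) (ε • x))
      (bound := fun ε : ℝ => ε ^ (h - 1) * C2) (ball_mem_nhds x0 hδpos) ?_ ?_ (measF2 x0 hx0s) ?_ (hbint C2) ?_
    · filter_upwards [ball_mem_nhds x0 hδpos] with x hx
      exact measF1 x (hxs x hx)
    · refine (hbint C1).mono' (measF1 x0 hx0s) ?_
      exact (ae_restrict_iff' measurableSet_Ioo).2 (ae_of_all _ fun ε hε => hb1 ε hε x0 hx0s)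
    · exact (ae_restrict_iff' measurableSet_Ioo).2
        (ae_of_all _ fun ε hε x hx => hb2 ε hε x (hxs x hx))
    · exact (ae_restrict_iff' measurableSet_Ioo).2
        (ae_of_all _ fun ε hε x hx => keyF1 ε hε x (hxs x hx))
  have hD : Integrable (fun ε : ℝ => (ε ^ (h - 1) * ε * ε) • fderiv ℝ (fderiv ℝ u) (ε • x0))
      (volume.restrict (Ioo (0:ℝ) 1)) := by
    refine (hbint C2).mono' (measF2 x0 hx0s) ?_
    exact (ae_restrict_iff' measurableSet_Ioo).2 (ae_of_all _ fun ε hε => hb2 ε hε x0 hx0s)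
  have hCt : ContinuousAt (Vt u h) x0 := by
    show ContinuousAt
      (fun x : E => ∫ ε in Ioo (0:ℝ) 1, (ε ^ (h - 1) * ε * ε) • fderiv ℝ (fderiv ℝ u) (ε • x)) x0
    refine continuousAt_of_dominated ?_ ?_ (hbint C2) ?_
    · filter_upwards [ball_mem_nhds x0 hδpos] with x hx
      exact measF2 x (hxs x hx)
    · filter_upwards [ball_mem_nhds x0 hδpos] with x hx
      exact (ae_restrict_iff' measurableSet_Ioo).2
        (ae_of_all _ fun ε hε => hb2 ε hε x (hxs x hx))
    · refine (ae_restrict_iff' measurableSet_Ioo).2 (ae_of_all _ fun ε hε => ?_)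
      have hco : ContinuousAt (fun x : E => fderiv ℝ (fderiv ℝ u) (ε • x)) x0 :=
        (cont2at _ (hmemB ε hε x0 hx0s)).comp ((continuous_id.const_smul ε).continuousAt)
      exact hco.const_smul (ε ^ (h - 1) * ε * ε)
  exact ⟨hA, hB, hCt, hD⟩

end Aux

theorem stmt1 {N : ℕ} (u : EuclideanSpace ℝ (Fin N) → ℝ)
    (hu : IsHarmonicOn u (ball 0 1)) (hc : ContinuousOn u (closedBall 0 1))
    (h : ℝ) (hh : 0 < h) :
    IsHarmonicOn (fun x => ∫ ε in Set.Ioo (0:ℝ) 1, ε ^ (h - 1) * u (ε • x))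
      (ball 0 1) := by
  obtain ⟨husm, hulap⟩ := hu
  have main := fun x0 hx0 => main_aux u husm hc h hh x0 hx0
  constructor
  · intro x hx
    suffices H : ContDiffAt ℝ 2 (Vz u h) x from H.contDiffWithinAt
    apply (contDiffAt_succ_iff_hasFDerivAt (n := 1)).2
    refine ⟨Vo u h, ⟨ball 0 1, isOpen_ball.mem_nhds hx, fun y hy => (main y hy).1⟩, ?_⟩
    apply (contDiffAt_succ_iff_hasFDerivAt (n := 0)).2
    refine ⟨Vt u h, ⟨ball 0 1, isOpen_ball.mem_nhds hx, fun y hy => (main y hy).2.1⟩, ?_⟩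
    apply contDiffAt_zero.2
    exact ⟨ball 0 1, isOpen_ball.mem_nhds hx,
      fun y hy => ((main y hy).2.2.1).continuousWithinAt⟩
  · intro x0 hx0
    have hB := (main x0 hx0).2.1
    have hD := (main x0 hx0).2.2.2
    -- pointwise second-derivative form of harmonicity of u
    have hlapu : ∀ y ∈ ball (0:EuclideanSpace ℝ (Fin N)) 1,
        ∑ i, fderiv ℝ (fderiv ℝ u) y (EuclideanSpace.single i 1) (EuclideanSpace.single i 1)
          = 0 := by
      intro y hy
      have hlz := hulap y hy
      rw [lap] at hlz
      rw [← hlz]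
      refine Finset.sum_congr rfl fun i _ => ?_
      have hy2 : HasFDerivAt (fderiv ℝ u) (fderiv ℝ (fderiv ℝ u) y) y :=
        (((husm.contDiffAt (isOpen_ball.mem_nhds hy)).fderiv_right (m := 1)
          (by norm_num)).differentiableAt one_ne_zero).hasFDerivAt
      have h3 := (hy2.clm_apply (hasFDerivAt_const (EuclideanSpace.single i 1) y)).fderiv
      rw [h3]; simp
    show lap (Vz u h) x0 = 0
    rw [lap]
    have step1 : ∀ i : Fin N,
        fderiv ℝ (fun y => fderiv ℝ (Vz u h) y (EuclideanSpace.single i 1)) x0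
          (EuclideanSpace.single i 1)
        = (Vt u h x0) (EuclideanSpace.single i 1) (EuclideanSpace.single i 1) := by
      intro i
      have heq : (fun y => fderiv ℝ (Vz u h) y (EuclideanSpace.single i 1))
          =ᶠ[nhds x0] (fun y => (Vo u h) y (EuclideanSpace.single i 1)) := by
        filter_upwards [isOpen_ball.mem_nhds hx0] with y hy
        rw [((main y hy).1).fderiv]
      rw [heq.fderiv_eq]
      have h3 := (hB.clm_apply (hasFDerivAt_const (EuclideanSpace.single i 1) x0)).fderiv
      rw [h3]; simp
    have step2 : ∀ i : Fin N,
        (Vt u h x0) (EuclideanSpace.single i 1) (EuclideanSpace.single i 1)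
        = ∫ ε in Set.Ioo (0:ℝ) 1,
            ((ε ^ (h - 1) * ε * ε) • fderiv ℝ (fderiv ℝ u) (ε • x0))
              (EuclideanSpace.single i 1) (EuclideanSpace.single i 1) := by
      intro i
      show (∫ ε in Set.Ioo (0:ℝ) 1,
          (ε ^ (h - 1) * ε * ε) • fderiv ℝ (fderiv ℝ u) (ε • x0))
          (EuclideanSpace.single i 1) (EuclideanSpace.single i 1) = _
      rw [ContinuousLinearMap.integral_apply hD,
        ContinuousLinearMap.integral_apply (hD.apply_continuousLinearMap _)]
    have hzero : Set.EqOn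
        (fun ε : ℝ => ∑ i : Fin N,
          ((ε ^ (h - 1) * ε * ε) • fderiv ℝ (fderiv ℝ u) (ε • x0))
            (EuclideanSpace.single i 1) (EuclideanSpace.single i 1))
        (fun _ => (0:ℝ)) (Set.Ioo (0:ℝ) 1) := by
      intro ε hε
      have hmem : ε • x0 ∈ ball (0:EuclideanSpace ℝ (Fin N)) 1 := by
        rw [mem_ball_zero_iff, norm_smul, Real.norm_eq_abs, abs_of_pos hε.1]
        have hx0n : ‖x0‖ < 1 := by simpa using hx0
        nlinarith [hε.1, hε.2, norm_nonneg x0]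
      simp only [ContinuousLinearMap.smul_apply, smul_eq_mul]
      rw [← Finset.mul_sum, hlapu _ hmem, mul_zero]
    calc ∑ i : Fin N, fderiv ℝ (fun y => fderiv ℝ (Vz u h) y (EuclideanSpace.single i 1)) x0
          (EuclideanSpace.single i 1)
        = ∑ i : Fin N, ∫ ε in Set.Ioo (0:ℝ) 1,
            ((ε ^ (h - 1) * ε * ε) • fderiv ℝ (fderiv ℝ u) (ε • x0))
              (EuclideanSpace.single i 1) (EuclideanSpace.single i 1) :=
          Finset.sum_congr rfl fun i _ => (step1 i).trans (step2 i)
      _ = ∫ ε in Set.Ioo (0:ℝ) 1, ∑ i : Fin N,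
            ((ε ^ (h - 1) * ε * ε) • fderiv ℝ (fderiv ℝ u) (ε • x0))
              (EuclideanSpace.single i 1) (EuclideanSpace.single i 1) := by
          refine (integral_finset_sum _ fun i _ => ?_).symm
          exact (hD.apply_continuousLinearMap _).apply_continuousLinearMap _
      _ = 0 := by
          rw [setIntegral_congr_fun measurableSet_Ioo hzero, integral_zero]
end

section
/- In ℝ², if û is harmonic on an open set U not containing 0, then x ↦ û(x/‖x‖²) is harmonic on the inverted set {x ≠ 0 : x/‖x‖² ∈ U}. -/
open MeasureTheory Metric
open scoped RealInnerProductSpace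

section Helpers

noncomputable section

local notation "E2" => EuclideanSpace ℝ (Fin 2)

private def Jm (x : E2) : E2 →L[ℝ] E2 :=
  (‖x‖^2)⁻¹ • ContinuousLinearMap.id ℝ (EuclideanSpace ℝ (Fin 2))
    + ((-(((‖x‖^2)^2)⁻¹) * 2) • innerSL ℝ x).smulRight x

private lemma Jm_apply (x v : E2) :
    Jm x v = (‖x‖^2)⁻¹ • v + (-(((‖x‖^2)^2)⁻¹) * 2 * ⟪x, v⟫) • x := by
  simp [Jm, mul_assoc]

private lemma hasFDerivAt_nsq_inv {x : E2} (hx : x ≠ 0) :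
    HasFDerivAt (fun y : E2 => (‖y‖^2)⁻¹)
      ((-(((‖x‖^2)^2)⁻¹) * 2) • innerSL ℝ x) x := by
  have hr : ‖x‖^2 ≠ 0 := pow_ne_zero _ (norm_ne_zero_iff.2 hx)
  have h1 : HasFDerivAt (fun y : E2 => ‖y‖^2) (2 • innerSL ℝ x) x :=
    (hasStrictFDerivAt_norm_sq x).hasFDerivAt
  have h2 := (hasFDerivAt_inv hr).comp x h1
  refine h2.congr_fderiv ?_
  ext v
  simp [mul_comm]
  ring

private lemma hasFDerivAt_inversion {x : E2} (hx : x ≠ 0) :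
    HasFDerivAt (fun y : E2 => (‖y‖^2)⁻¹ • y) (Jm x) x :=
  (hasFDerivAt_nsq_inv hx).smul (hasFDerivAt_id x)

private lemma key1 {x : E2} (hx : x ≠ 0) (e : E2) (he : ⟪e, e⟫ = 1) :
    ∃ W : E2 →L[ℝ] E2, HasFDerivAt (fun y => Jm y e) W x ∧
      W e = (-(4 * ((‖x‖^2)^2)⁻¹ * ⟪x, e⟫)) • e
        + (8 * ((‖x‖^2)^3)⁻¹ * ⟪x, e⟫^2 - 2 * ((‖x‖^2)^2)⁻¹) • x := by
  have hn : ‖x‖ ≠ 0 := norm_ne_zero_iff.2 hx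
  have hr : ‖x‖^2 ≠ 0 := pow_ne_zero _ hn
  have hr2 : (‖x‖^2)^2 ≠ 0 := pow_ne_zero _ hr
  have h1 : HasFDerivAt (fun y : E2 => ‖y‖^2) (2 • innerSL ℝ x) x :=
    (hasStrictFDerivAt_norm_sq x).hasFDerivAt
  have hq0 : HasFDerivAt (fun y : E2 => (‖y‖^2)^2)
      (‖x‖^2 • (2 • innerSL ℝ x) + ‖x‖^2 • (2 • innerSL ℝ x)) x := by
    simpa [pow_two, Pi.mul_def] using h1.mul h1
  have hq := (hasFDerivAt_inv hr2).comp x hq0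
  have hinn : HasFDerivAt (fun y : E2 => ⟪y, e⟫) (innerSL ℝ e) x := by
    have := (innerSL ℝ e).hasFDerivAt (x := x)
    convert this using 1
    funext y
    rw [innerSL_apply_apply]
    exact (real_inner_comm y e).symm
  have hc2 := ((hq.neg.mul_const 2).mul hinn)
  have hW := ((hasFDerivAt_nsq_inv hx).smul (hasFDerivAt_const e x)).add
      (hc2.smul (hasFDerivAt_id x))
  refine ⟨_, hW.congr_of_eventuallyEq (Filter.Eventually.of_forall fun y => by
      simp [Jm_apply, Function.comp]), ?_⟩
  simp only [ContinuousLinearMap.add_apply, ContinuousLinearMap.smul_apply,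
    ContinuousLinearMap.coe_smul', Pi.smul_apply, ContinuousLinearMap.smulRight_apply,
    ContinuousLinearMap.zero_apply, ContinuousLinearMap.comp_apply,
    ContinuousLinearMap.coe_id', id_eq,
    ContinuousLinearMap.one_apply, smul_eq_mul, innerSL_apply_apply,
    ContinuousLinearMap.neg_apply, smul_zero, zero_add, Function.comp]
  simp only [Pi.mul_apply, Pi.neg_apply, Function.comp_apply, ContinuousLinearMap.toSpanSingleton_apply]
  rw [real_inner_comm e x]
  rw [show (inner ℝ e e : ℝ) = 1 from he]
  match_scalars <;> field_simp <;> ring_nf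
  have h8 : ‖x‖ ^ 8 * ‖x‖⁻¹ ^ 8 = 1 := by rw [← mul_pow, mul_inv_cancel₀ hn, one_pow]
  linear_combination (⟪e, x⟫ ^ 2 * 8) * h8

private lemma sum_inner_smul (x : E2) :
    ∑ i, ⟪x, EuclideanSpace.single i 1⟫ • EuclideanSpace.single i (1:ℝ) = x := by
  ext j
  fin_cases j <;>
    simp [Fin.sum_univ_two, EuclideanSpace.single_apply, EuclideanSpace.inner_single_right]

private lemma sum_inner_sq (x : E2) :
    ∑ i, ⟪x, EuclideanSpace.single i 1⟫ * ⟪x, EuclideanSpace.single i 1⟫ = ‖x‖^2 := by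
  have : ‖x‖^2 = ⟪x, x⟫ := (real_inner_self_eq_norm_sq x).symm
  rw [this]
  simp [EuclideanSpace.inner_single_right, PiLp.inner_apply, RCLike.inner_apply, Fin.sum_univ_two]
  rw [EuclideanSpace.norm_eq, Real.sq_sqrt (by positivity), Fin.sum_univ_two]
  simp [sq]

private lemma sum_inner_sq' (x : E2) :
    ∑ i, ⟪x, EuclideanSpace.single i 1⟫ ^ 2 = ‖x‖^2 := by
  simpa [pow_two] using sum_inner_sq x

private lemma sum_W {x : E2} (hx : x ≠ 0) :
    ∑ i, ((-(4 * ((‖x‖^2)^2)⁻¹ * ⟪x, EuclideanSpace.single i 1⟫)) • EuclideanSpace.single i (1:ℝ)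
      + (8 * ((‖x‖^2)^3)⁻¹ * ⟪x, EuclideanSpace.single i 1⟫^2 - 2 * ((‖x‖^2)^2)⁻¹) • x) = 0 := by
  have hr : ‖x‖^2 ≠ 0 := pow_ne_zero _ (norm_ne_zero_iff.2 hx)
  rw [Finset.sum_add_distrib]
  have h1 : ∑ i, (-(4 * ((‖x‖^2)^2)⁻¹ * ⟪x, EuclideanSpace.single i 1⟫))
        • EuclideanSpace.single i (1:ℝ)
      = (-(4 * ((‖x‖^2)^2)⁻¹)) • x := by
    calc ∑ i, (-(4 * ((‖x‖^2)^2)⁻¹ * ⟪x, EuclideanSpace.single i 1⟫))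
          • EuclideanSpace.single i (1:ℝ)
        = ∑ i, (-(4 * ((‖x‖^2)^2)⁻¹))
            • (⟪x, EuclideanSpace.single i 1⟫ • EuclideanSpace.single i (1:ℝ)) := by
          refine Finset.sum_congr rfl fun i _ => ?_
          rw [smul_smul]
          congr 1
          ring
      _ = (-(4 * ((‖x‖^2)^2)⁻¹)) • x := by rw [← Finset.smul_sum, sum_inner_smul]
  have h2 : ∑ i, (8 * ((‖x‖^2)^3)⁻¹ * ⟪x, EuclideanSpace.single i 1⟫^2 - 2 * ((‖x‖^2)^2)⁻¹) • x
      = (8 * ((‖x‖^2)^3)⁻¹ * ‖x‖^2 - 4 * ((‖x‖^2)^2)⁻¹) • x := by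
    rw [← Finset.sum_smul]
    congr 1
    rw [Finset.sum_sub_distrib, ← Finset.mul_sum, sum_inner_sq']
    simp [Finset.sum_const]
    ring
  rw [h1, h2, ← add_smul]
  convert zero_smul ℝ x using 2
  field_simp
  ring

private lemma key2 (B : E2 →L[ℝ] E2 →L[ℝ] ℝ) {x : E2} (hx : x ≠ 0) :
    ∑ i, B (Jm x (EuclideanSpace.single i 1)) (Jm x (EuclideanSpace.single i 1))
      = ((‖x‖^2)^2)⁻¹ * ∑ i, B (EuclideanSpace.single i 1) (EuclideanSpace.single i 1) := by
  have hr : ‖x‖^2 ≠ 0 := pow_ne_zero _ (norm_ne_zero_iff.2 hx)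
  have hx1 : ∀ v, B x v = ∑ i, ⟪x, EuclideanSpace.single i 1⟫ * B (EuclideanSpace.single i 1) v := by
    intro v
    conv_lhs => rw [← sum_inner_smul x]
    simp
  have hx2 : ∀ v : E2, B v x = ∑ i, ⟪x, EuclideanSpace.single i 1⟫ * B v (EuclideanSpace.single i 1) := by
    intro v
    conv_lhs => rw [← sum_inner_smul x]
    simp
  have hs := sum_inner_sq x
  simp only [Jm_apply, map_add, _root_.map_smul, ContinuousLinearMap.add_apply,
    ContinuousLinearMap.smul_apply, smul_eq_mul]
  simp only [hx1, hx2]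
  rw [Fin.sum_univ_two] at hs
  simp only [Fin.sum_univ_two]
  set a0 := ⟪x, EuclideanSpace.single 0 1⟫ with ha0
  set a1 := ⟪x, EuclideanSpace.single 1 1⟫ with ha1
  set b00 := B (EuclideanSpace.single 0 1) (EuclideanSpace.single 0 1) with hb00
  set b01 := B (EuclideanSpace.single 0 1) (EuclideanSpace.single 1 1) with hb01
  set b10 := B (EuclideanSpace.single 1 1) (EuclideanSpace.single 0 1) with hb10
  set b11 := B (EuclideanSpace.single 1 1) (EuclideanSpace.single 1 1) with hb11
  rw [← hs] at hr ⊢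
  field_simp
  rw [div_eq_div_iff (pow_ne_zero _ (by rwa [sq, sq])) (pow_ne_zero _ (by rwa [sq, sq]))]
  ring

end

end Helpers

theorem stmt11 (U : Set (EuclideanSpace ℝ (Fin 2))) (hU : IsOpen U) (h0 : (0 : EuclideanSpace ℝ (Fin 2)) ∉ U)
    (u : EuclideanSpace ℝ (Fin 2) → ℝ) (hu : IsHarmonicOn u U) :
    IsHarmonicOn (fun x => u ((‖x‖ ^ 2)⁻¹ • x))
      {x | x ≠ 0 ∧ (‖x‖ ^ 2)⁻¹ • x ∈ U} := by
  set V : Set (EuclideanSpace ℝ (Fin 2)) := {x | x ≠ 0 ∧ (‖x‖ ^ 2)⁻¹ • x ∈ U} with hVdef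
  have hgC : ∀ x : EuclideanSpace ℝ (Fin 2), x ≠ 0 →
      ContDiffAt ℝ 2 (fun y : EuclideanSpace ℝ (Fin 2) => (‖y‖^2)⁻¹ • y) x := by
    intro x hx
    exact ((contDiff_norm_sq ℝ).contDiffAt.inv
      (pow_ne_zero _ (norm_ne_zero_iff.2 hx))).smul contDiffAt_id
  have hVopen : IsOpen V := by
    have hVeq : V = {x : EuclideanSpace ℝ (Fin 2) | x ≠ 0}
        ∩ (fun y : EuclideanSpace ℝ (Fin 2) => (‖y‖^2)⁻¹ • y) ⁻¹' U := by
      ext z; simp [hVdef, Set.mem_setOf_eq]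
    rw [hVeq]
    refine ContinuousOn.isOpen_inter_preimage ?_ ?_ hU
    · exact fun z hz => ((hgC z hz).continuousAt).continuousWithinAt
    · exact isOpen_ne
  constructor
  · -- smoothness
    have : ContDiffOn ℝ 2 (u ∘ fun y : EuclideanSpace ℝ (Fin 2) => (‖y‖^2)⁻¹ • y) V := by
      refine hu.1.comp ?_ ?_
      · exact fun z hz => (hgC z hz.1).contDiffWithinAt
      · exact fun z hz => hz.2
    exact this
  · intro x hx
    obtain ⟨hx0, hyU⟩ := hx
    have hr : ‖x‖^2 ≠ 0 := pow_ne_zero _ (norm_ne_zero_iff.2 hx0)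
    set y₀ : EuclideanSpace ℝ (Fin 2) := (‖x‖^2)⁻¹ • x with hy₀
    have hCu : ContDiffAt ℝ 2 u y₀ := hu.1.contDiffAt (hU.mem_nhds hyU)
    have hF : ContDiffAt ℝ 1 (fderiv ℝ u) y₀ := hCu.fderiv_right (by norm_num)
    set B := fderiv ℝ (fderiv ℝ u) y₀ with hBdef
    have hB : HasFDerivAt (fderiv ℝ u) B y₀ :=
      (hF.differentiableAt one_ne_zero).hasFDerivAt
    have hud : ∀ z ∈ U, DifferentiableAt ℝ u z := fun z hz =>
      (hu.1.contDiffAt (hU.mem_nhds hz)).differentiableAt two_ne_zero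
    have hxV : x ∈ V := ⟨hx0, hyU⟩
    have hev : ∀ᶠ z in nhds x,
        fderiv ℝ (fun w : EuclideanSpace ℝ (Fin 2) => u ((‖w‖ ^ 2)⁻¹ • w)) z
          = (fderiv ℝ u ((‖z‖^2)⁻¹ • z)).comp (Jm z) := by
      filter_upwards [hVopen.mem_nhds hxV] with z hz
      have hcomp := HasFDerivAt.comp (f := fun y : EuclideanSpace ℝ (Fin 2) => (‖y‖^2)⁻¹ • y)
        z ((hud _ hz.2).hasFDerivAt) (hasFDerivAt_inversion hz.1)
      exact (hcomp.congr_of_eventuallyEq (Filter.Eventually.of_forall fun w => rfl)).fderiv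
    have hterm : ∀ i : Fin 2,
        fderiv ℝ (fun z => fderiv ℝ (fun w : EuclideanSpace ℝ (Fin 2) => u ((‖w‖ ^ 2)⁻¹ • w)) z
            (EuclideanSpace.single i 1)) x (EuclideanSpace.single i 1)
          = fderiv ℝ u y₀
              ((-(4 * ((‖x‖^2)^2)⁻¹ * ⟪x, EuclideanSpace.single i 1⟫))
                  • EuclideanSpace.single i (1:ℝ)
                + (8 * ((‖x‖^2)^3)⁻¹ * ⟪x, EuclideanSpace.single i 1⟫^2
                    - 2 * ((‖x‖^2)^2)⁻¹) • x)
            + B (Jm x (EuclideanSpace.single i 1)) (Jm x (EuclideanSpace.single i 1)) := by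
      intro i
      have he1 : ⟪EuclideanSpace.single i (1:ℝ), EuclideanSpace.single i (1:ℝ)⟫ = 1 := by
        simp [EuclideanSpace.inner_single_right, EuclideanSpace.single_apply]
      obtain ⟨W, hW, hWe⟩ := key1 hx0 (EuclideanSpace.single i 1) he1
      have hA : HasFDerivAt (fun z : EuclideanSpace ℝ (Fin 2) => fderiv ℝ u ((‖z‖^2)⁻¹ • z))
          (B.comp (Jm x)) x :=
        hB.comp x (hasFDerivAt_inversion hx0)
      have hT := hA.clm_apply hW
      have heq : fderiv ℝ (fun z => fderiv ℝ
            (fun w : EuclideanSpace ℝ (Fin 2) => u ((‖w‖ ^ 2)⁻¹ • w)) z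
            (EuclideanSpace.single i 1)) x
          = fderiv ℝ (fun z : EuclideanSpace ℝ (Fin 2) =>
              (fderiv ℝ u ((‖z‖^2)⁻¹ • z)) (Jm z (EuclideanSpace.single i 1))) x := by
        refine Filter.EventuallyEq.fderiv_eq ?_
        filter_upwards [hev] with z hz
        rw [hz]
        rfl
      rw [heq, hT.fderiv]
      simp only [ContinuousLinearMap.add_apply, ContinuousLinearMap.comp_apply,
        ContinuousLinearMap.flip_apply]
      rw [hWe]
    show lap _ x = 0
    rw [lap]
    rw [Finset.sum_congr rfl fun i _ => hterm i]
    rw [Finset.sum_add_distrib, ← map_sum, sum_W hx0, map_zero, zero_add, key2 B hx0]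
    have hlapu : ∑ i, B (EuclideanSpace.single i 1) (EuclideanSpace.single i 1)
        = lap u y₀ := by
      rw [lap]
      refine (Finset.sum_congr rfl fun i _ => ?_).symm
      have haux : HasFDerivAt (fun z => fderiv ℝ u z (EuclideanSpace.single i 1))
          ((ContinuousLinearMap.apply ℝ ℝ (EuclideanSpace.single i 1)).comp B) y₀ := by
        have := (ContinuousLinearMap.apply ℝ ℝ
            (EuclideanSpace.single i (1:ℝ))).hasFDerivAt.comp y₀ hB
        exact this.congr_of_eventuallyEq (Filter.Eventually.of_forall fun z => by simp)
      rw [haux.fderiv]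
      simp
    rw [hlapu, hu.2 y₀ hyU, mul_zero]
end

section
/- Let K > 0 be a real number (scalar case m = 1), 0 < r < 1, and û harmonic and bounded on the open unit disc in ℝ². Define u on the disc by u(x) = Σ_{j≥0} q^j ( û(x r^{2j}) − q û((x/‖x‖²) r^{2j+2}) ) for r < ‖x‖ < 1 and u(x) = (2K/(1+K)) Σ_{j≥0} q^j û(x r^{2j}) for ‖x‖ < r, where q = (1-K)/(1+K). Then the boundary values from outside and inside the circle ‖x‖ = r agree: u⁻(η) = u⁺(η) for ‖η‖ = r, where u⁻ and u⁺ denote radial limits from ‖x‖ > r and ‖x‖ < r respectively. -/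
open MeasureTheory Metric
open scoped RealInnerProductSpace

theorem stmt12 (K : ℝ) (hK : 0 < K) (r : ℝ) (hr0 : 0 < r) (hr1 : r < 1)
    (u : EuclideanSpace ℝ (Fin 2) → ℝ)
    (hharm : IsHarmonicOn u (ball 0 1))
    (hbd : ∃ C, ∀ x ∈ ball (0 : EuclideanSpace ℝ (Fin 2)) 1, |u x| ≤ C)
    (hc : ContinuousOn u (closedBall 0 1))
    (η : EuclideanSpace ℝ (Fin 2)) (hη : ‖η‖ = r) :
    ∃ L : ℝ,
      Filter.Tendsto (fun t : ℝ => ∑' j : ℕ, ((1 - K) / (1 + K)) ^ j *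
          (u ((r ^ (2 * j)) • (t • η)) -
            ((1 - K) / (1 + K)) *
              u ((r ^ (2 * j + 2)) • ((‖t • η‖ ^ 2)⁻¹ • (t • η)))))
        (nhdsWithin 1 (Set.Ioi 1)) (nhds L) ∧
      Filter.Tendsto (fun t : ℝ => (2 * K / (1 + K)) *
          ∑' j : ℕ, ((1 - K) / (1 + K)) ^ j * u ((r ^ (2 * j)) • (t • η)))
        (nhdsWithin 1 (Set.Iio 1)) (nhds L) := by
  obtain ⟨C, hC⟩ := hbd
  set q : ℝ := (1 - K) / (1 + K) with hqdef
  have h1K : (0:ℝ) < 1 + K := by linarith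
  have hq : |q| < 1 := by
    rw [abs_lt]
    constructor
    · rw [hqdef, lt_div_iff₀ h1K]; linarith
    · rw [hqdef, div_lt_one h1K]; linarith
  have hq1 : (1:ℝ) - q = 2 * K / (1 + K) := by
    rw [hqdef]; field_simp; ring
  have hC0 : 0 ≤ C := (abs_nonneg _).trans (hC 0 (by simp [mem_ball_zero_iff]))
  have hcont : ∀ x : EuclideanSpace ℝ (Fin 2), ‖x‖ < 1 → ContinuousAt u x := by
    intro x hx
    exact (hc.mono ball_subset_closedBall).continuousAt
      (isOpen_ball.mem_nhds (by simpa [mem_ball_zero_iff] using hx))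
  have hCmem : ∀ x : EuclideanSpace ℝ (Fin 2), ‖x‖ < 1 → |u x| ≤ C := by
    intro x hx; exact hC x (by simpa [mem_ball_zero_iff] using hx)
  -- the inner points r^(2j) • η
  have hnorm_pt : ∀ j : ℕ, ‖(r ^ (2*j) : ℝ) • η‖ < 1 := by
    intro j
    rw [norm_smul, Real.norm_eq_abs, abs_of_nonneg (by positivity), hη]
    calc r^(2*j) * r ≤ 1 * r := by
          gcongr
          exact pow_le_one₀ hr0.le hr1.le
      _ < 1 := by linarith
  have hS : Summable (fun j : ℕ => |q|^j * (C + |q| * C)) :=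
    (summable_geometric_of_lt_one (abs_nonneg q) hq).mul_right _
  -- per-term limits of the first-component points
  have Tpt1 : ∀ j : ℕ, Filter.Tendsto (fun t : ℝ => (r ^ (2*j) : ℝ) • (t • η))
      (nhds 1) (nhds ((r ^ (2*j) : ℝ) • η)) := by
    intro j
    have hco : Continuous (fun t : ℝ => (r ^ (2*j) : ℝ) • (t • η)) := by fun_prop
    simpa using hco.tendsto 1
  have Tpt2 : ∀ j : ℕ, Filter.Tendsto
      (fun t : ℝ => (r ^ (2*j+2) : ℝ) • ((‖t • η‖ ^ 2)⁻¹ • (t • η)))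
      (nhds 1) (nhds ((r ^ (2*j) : ℝ) • η)) := by
    intro j
    have hinv : ContinuousAt (fun t : ℝ => (‖t • η‖ ^ 2)⁻¹) 1 := by
      apply ContinuousAt.inv₀
      · fun_prop
      · simp only [one_smul, hη]
        positivity
    have hco : ContinuousAt
        (fun t : ℝ => (r ^ (2*j+2) : ℝ) • ((‖t • η‖ ^ 2)⁻¹ • (t • η))) 1 :=
      ContinuousAt.smul (continuousAt_const : ContinuousAt (fun _ : ℝ => (r ^ (2*j+2) : ℝ)) 1)
        (hinv.smul (by fun_prop : ContinuousAt (fun t : ℝ => t • η) 1))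
    have hval : (r ^ (2*j+2) : ℝ) • ((‖(1:ℝ) • η‖ ^ 2)⁻¹ • ((1:ℝ) • η))
        = (r ^ (2*j) : ℝ) • η := by
      rw [one_smul, hη, smul_smul]
      congr 1
      field_simp
      ring
    have := hco.tendsto
    rw [hval] at this
    exact this
  have hTu : ∀ j : ℕ, Filter.Tendsto (fun t : ℝ => u ((r ^ (2*j) : ℝ) • (t • η)))
      (nhds 1) (nhds (u ((r ^ (2*j) : ℝ) • η))) := fun j =>
    Filter.Tendsto.comp (hcont _ (hnorm_pt j)) (Tpt1 j)
  have hTu2 : ∀ j : ℕ, Filter.Tendsto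
      (fun t : ℝ => u ((r ^ (2*j+2) : ℝ) • ((‖t • η‖ ^ 2)⁻¹ • (t • η))))
      (nhds 1) (nhds (u ((r ^ (2*j) : ℝ) • η))) := fun j =>
    Filter.Tendsto.comp (hcont _ (hnorm_pt j)) (Tpt2 j)
  refine ⟨(1 - q) * ∑' j : ℕ, q ^ j * u ((r ^ (2*j) : ℝ) • η), ?_, ?_⟩
  · -- outer limit
    have key : Filter.Tendsto (fun t : ℝ => ∑' j : ℕ, q ^ j *
        (u ((r ^ (2 * j)) • (t • η)) -
          q * u ((r ^ (2 * j + 2)) • ((‖t • η‖ ^ 2)⁻¹ • (t • η)))))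
        (nhdsWithin 1 (Set.Ioi 1))
        (nhds (∑' j : ℕ, q ^ j *
          (u ((r ^ (2*j) : ℝ) • η) - q * u ((r ^ (2*j) : ℝ) • η)))) := by
      apply tendsto_tsum_of_dominated_convergence hS
      · intro j
        exact (((hTu j).sub (((hTu2 j)).const_mul q)).const_mul (q^j)).mono_left
          nhdsWithin_le_nhds
      · have hmem : Set.Ioo (1:ℝ) r⁻¹ ∈ nhdsWithin 1 (Set.Ioi 1) :=
          Ioo_mem_nhdsGT_of_mem ⟨le_refl _, (one_lt_inv₀ hr0).2 hr1⟩
        filter_upwards [hmem] with t ht j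
        obtain ⟨ht1, ht2⟩ := ht
        have ht0 : 0 < t := by linarith
        have htr : 0 < t * r := by positivity
        have htr1 : t * r < 1 := by
          calc t * r < r⁻¹ * r := mul_lt_mul_of_pos_right ht2 hr0
            _ = 1 := inv_mul_cancel₀ hr0.ne'
        have hnt : ‖t • η‖ = t * r := by
          rw [norm_smul, Real.norm_eq_abs, abs_of_pos ht0, hη]
        have hb1 : ‖(r ^ (2*j) : ℝ) • (t • η)‖ < 1 := by
          rw [norm_smul, Real.norm_eq_abs, abs_of_nonneg (by positivity), hnt]
          have h1 : r^(2*j) ≤ 1 := pow_le_one₀ hr0.le hr1.le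
          nlinarith
        have hb2 : ‖(r ^ (2*j+2) : ℝ) • ((‖t • η‖ ^ 2)⁻¹ • (t • η))‖ < 1 := by
          rw [norm_smul, norm_smul, hnt, Real.norm_eq_abs, Real.norm_eq_abs,
            abs_of_nonneg (by positivity), abs_of_nonneg (by positivity)]
          have hred : ((t*r)^2)⁻¹ * (t*r) = (t*r)⁻¹ := by
            rw [sq]; field_simp
          rw [hred, ← div_eq_mul_inv, div_lt_one htr]
          calc r^(2*j+2) ≤ r^2 := pow_le_pow_of_le_one hr0.le hr1.le (by omega)
            _ < 1 * r := by nlinarith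
            _ ≤ t * r := by nlinarith
        have hu1 := hCmem _ hb1
        have hu2 := hCmem _ hb2
        calc ‖q ^ j * (u ((r ^ (2 * j)) • (t • η)) -
              q * u ((r ^ (2 * j + 2)) • ((‖t • η‖ ^ 2)⁻¹ • (t • η))))‖
            = |q|^j * |u ((r ^ (2 * j)) • (t • η)) -
              q * u ((r ^ (2 * j + 2)) • ((‖t • η‖ ^ 2)⁻¹ • (t • η)))| := by
              rw [Real.norm_eq_abs, abs_mul, abs_pow]
          _ ≤ |q|^j * (C + |q| * C) := by
              gcongr
              refine (abs_sub _ _).trans ?_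
              gcongr
              rw [abs_mul]
              gcongr
    have heq : (∑' j : ℕ, q ^ j *
        (u ((r ^ (2*j) : ℝ) • η) - q * u ((r ^ (2*j) : ℝ) • η)))
        = (1 - q) * ∑' j : ℕ, q ^ j * u ((r ^ (2*j) : ℝ) • η) := by
      rw [← tsum_mul_left]
      exact tsum_congr fun j => by ring
    rw [heq] at key
    exact key
  · -- inner limit
    have key : Filter.Tendsto (fun t : ℝ =>
        ∑' j : ℕ, q ^ j * u ((r ^ (2 * j)) • (t • η)))
        (nhdsWithin 1 (Set.Iio 1))
        (nhds (∑' j : ℕ, q ^ j * u ((r ^ (2*j) : ℝ) • η))) := by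
      apply tendsto_tsum_of_dominated_convergence
        ((summable_geometric_of_lt_one (abs_nonneg q) hq).mul_right C)
      · intro j
        exact ((hTu j).const_mul (q^j)).mono_left nhdsWithin_le_nhds
      · have hmem : Set.Ioo (0:ℝ) 1 ∈ nhdsWithin 1 (Set.Iio 1) :=
          Ioo_mem_nhdsLT_of_mem ⟨zero_lt_one, le_refl _⟩
        filter_upwards [hmem] with t ht j
        obtain ⟨ht0, ht1⟩ := ht
        have hb1 : ‖(r ^ (2*j) : ℝ) • (t • η)‖ < 1 := by
          rw [norm_smul, norm_smul, Real.norm_eq_abs, Real.norm_eq_abs,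
            abs_of_nonneg (by positivity), abs_of_pos ht0, hη]
          have h1 : r^(2*j) ≤ 1 := pow_le_one₀ hr0.le hr1.le
          calc r^(2*j) * (t * r) ≤ 1 * (t * r) :=
                mul_le_mul_of_nonneg_right h1 (by positivity)
            _ = t * r := one_mul _
            _ < 1 := by nlinarith
        have hu1 := hCmem _ hb1
        calc ‖q ^ j * u ((r ^ (2 * j)) • (t • η))‖
            = |q|^j * |u ((r ^ (2 * j)) • (t • η))| := by
              rw [Real.norm_eq_abs, abs_mul, abs_pow]
          _ ≤ |q|^j * C := by gcongr
    rw [hq1]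
    exact key.const_mul _
end
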